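/- Let G be a birth-death chain (X = ℕ₀, x ∼ y iff |x−y| = 1) with ρ(k) = k, sphere curvature κ(r) = κ(r−1, r), and Deg(0) = b(0,1)/m(0). Then equality holds in the Laplacian comparison: ℒρ(k) = ∑_{j=1}^{k} κ(j) − Deg(0) for all k ∈ ℕ₀. -/

import Mathlib

noncomputable def bdLap (β m : ℕ → ℝ) (f : ℕ → ℝ) (k : ℕ) : ℝ :=
  (1 / m k) * (β k * (f k - f (k + 1)) +
    (if k = 0 then 0 else β (k - 1) * (f k - f (k - 1))))

def BdLip1 (f : ℕ → ℝ) : Prop := ∀ j k : ℕ, |f j - f k| ≤ |(j : ℝ) - (k : ℝ)|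

/-- Ollivier Ricci curvature of a birth-death chain via the dual formula. -/
noncomputable def bdKappa (β m : ℕ → ℝ) (j k : ℕ) : ℝ :=
  sInf {t : ℝ | ∃ f : ℕ → ℝ, BdLip1 f ∧ (f j - f k) / ((k : ℝ) - (j : ℝ)) = 1 ∧
    t = (bdLap β m f j - bdLap β m f k) / ((k : ℝ) - (j : ℝ))}

lemma bdLip1_neg : BdLip1 (fun n => -(n : ℝ)) := by
  intro j k
  simp only [neg_sub_neg, abs_sub_comm ((k : ℝ)) ((j : ℝ))]
  exact le_refl _

lemma lb_aux (β m : ℕ → ℝ) (hβ : ∀ k, 0 < β k) (hm : ∀ k, 0 < m k) (i : ℕ)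
    (f : ℕ → ℝ) (hf : BdLip1 f) (h1 : f i - f (i + 1) = 1) :
    bdLap β m (fun n => -(n : ℝ)) i - bdLap β m (fun n => -(n : ℝ)) (i + 1)
      ≤ bdLap β m f i - bdLap β m f (i + 1) := by
  have hmu : ∀ k, (0:ℝ) < 1 / m k := fun k => one_div_pos.mpr (hm k)
  cases i with
  | zero =>
    have hA : f 1 - f 2 ≤ 1 := by
      have := hf 1 2
      have h2 : |((1:ℕ) : ℝ) - ((2:ℕ) : ℝ)| = 1 := by norm_num
      rw [h2] at this
      exact (abs_le.mp this).2
    have h2 : f (0 + 1) = f 0 - 1 := by linarith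
    have h2' : f 1 = f 0 - 1 := by rw [show (1:ℕ) = 0 + 1 by norm_num]; exact h2
    have hA' : f 0 - 1 - f 2 ≤ 1 := by rw [h2'] at hA; exact hA
    have e2 : (0:ℝ) ≤ (m 1)⁻¹ * (β 1 * (1 - (f 0 - 1 - f 2))) :=
      mul_nonneg (inv_nonneg.mpr (hm 1).le) (mul_nonneg (hβ 1).le (by linarith))
    simp only [bdLap, if_pos rfl, if_neg (Nat.succ_ne_zero 0)]
    rw [h2]
    norm_num
    nlinarith [e2]
  | succ s =>
    have hB : -1 ≤ f (s + 1) - f s := by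
      have := hf (s + 1) s
      have h2 : |((s + 1 : ℕ) : ℝ) - ((s : ℕ) : ℝ)| = 1 := by
        push_cast
        rw [show ((s : ℝ) + 1) - (s : ℝ) = 1 by ring]
        norm_num
      rw [h2] at this
      exact (abs_le.mp this).1
    have h2 : f (s + 1 + 1) = f (s + 1) - 1 := by linarith
    have hA : f (s + 2) - f (s + 3) ≤ 1 := by
      have := hf (s + 2) (s + 3)
      have h2 : |((s + 2 : ℕ) : ℝ) - ((s + 3 : ℕ) : ℝ)| = 1 := by
        push_cast
        rw [show ((s : ℝ) + 2) - ((s : ℝ) + 3) = -1 by ring]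
        norm_num
      rw [h2] at this
      exact (abs_le.mp this).2
    have h2'' : f (s + 2) = f (s + 1) - 1 := by
      rw [show s + 2 = s + 1 + 1 by omega]; exact h2
    have hA' : f (s + 1) - 1 - f (s + 3) ≤ 1 := by rw [h2''] at hA; exact hA
    have e1 : (0:ℝ) ≤ (1 / m (s + 1)) * (β s * ((f (s + 1) - f s) + 1)) :=
      mul_nonneg (hmu (s + 1)).le (mul_nonneg (hβ s).le (by linarith))
    have e2 : (0:ℝ) ≤ (1 / m (s + 2)) * (β (s + 2) * (1 - (f (s + 1) - 1 - f (s + 3)))) :=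
      mul_nonneg (hmu (s + 2)).le (mul_nonneg (hβ (s + 2)).le (by linarith))
    simp only [bdLap, if_neg (Nat.succ_ne_zero s), if_neg (Nat.succ_ne_zero (s + 1)),
      Nat.succ_sub_one]
    rw [h2]
    have hfix : s + 1 + 1 = s + 2 := rfl
    have hfix2 : s + 1 + 1 + 1 = s + 3 := rfl
    rw [hfix, hfix2]
    push_cast
    nlinarith [e1, e2]

lemma bdKappa_succ (β m : ℕ → ℝ) (hβ : ∀ k, 0 < β k) (hm : ∀ k, 0 < m k) (i : ℕ) :
    bdKappa β m i (i + 1) =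
      bdLap β m (fun n => -(n : ℝ)) i - bdLap β m (fun n => -(n : ℝ)) (i + 1) := by
  have hc : ((i + 1 : ℕ) : ℝ) - (i : ℝ) = 1 := by push_cast; ring
  have hS : {t : ℝ | ∃ f : ℕ → ℝ, BdLip1 f ∧
      (f i - f (i + 1)) / (((i + 1 : ℕ) : ℝ) - (i : ℝ)) = 1 ∧
      t = (bdLap β m f i - bdLap β m f (i + 1)) / (((i + 1 : ℕ) : ℝ) - (i : ℝ))} =
      {t : ℝ | ∃ f : ℕ → ℝ, BdLip1 f ∧ f i - f (i + 1) = 1 ∧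
        t = bdLap β m f i - bdLap β m f (i + 1)} := by
    simp only [hc, div_one]
  have hmem : bdLap β m (fun n => -(n : ℝ)) i - bdLap β m (fun n => -(n : ℝ)) (i + 1) ∈
      {t : ℝ | ∃ f : ℕ → ℝ, BdLip1 f ∧ f i - f (i + 1) = 1 ∧
        t = bdLap β m f i - bdLap β m f (i + 1)} := by
    exact ⟨fun n => -(n : ℝ), bdLip1_neg, by push_cast; ring, rfl⟩
  have hlb : ∀ t ∈ {t : ℝ | ∃ f : ℕ → ℝ, BdLip1 f ∧ f i - f (i + 1) = 1 ∧
        t = bdLap β m f i - bdLap β m f (i + 1)},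
      bdLap β m (fun n => -(n : ℝ)) i - bdLap β m (fun n => -(n : ℝ)) (i + 1) ≤ t := by
    rintro t ⟨f, hf, h1, rfl⟩
    exact lb_aux β m hβ hm i f hf h1
  unfold bdKappa
  rw [hS]
  exact le_antisymm (csInf_le ⟨_, hlb⟩ hmem) (le_csInf ⟨_, hmem⟩ hlb)

lemma bdLap_neg_id (β m : ℕ → ℝ) (k : ℕ) :
    bdLap β m (fun n => -(n : ℝ)) k = -bdLap β m (fun n => (n : ℝ)) k := by
  unfold bdLap
  split_ifs <;> ring

/-- Equality in the Laplacian comparison on birth-death chains: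
`ℒρ(k) = ∑_{j=1}^k κ(j−1,j) − Deg(0)` for `ρ(k) = k`, with sphere curvature
`κ(j) = κ(j−1,j)` and `Deg(0) = b(0,1)/m(0)`. -/
theorem bd_laplacian_comparison_eq (β m : ℕ → ℝ) (hβ : ∀ k, 0 < β k) (hm : ∀ k, 0 < m k) :
    ∀ k : ℕ, bdLap β m (fun n => (n : ℝ)) k =
      (∑ j ∈ Finset.Icc 1 k, bdKappa β m (j - 1) j) - β 0 / m 0 := by
  intro k
  induction k with
  | zero =>
    simp only [Finset.Icc_self, Finset.Icc_eq_empty (by norm_num : ¬(1:ℕ) ≤ 0),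
      Finset.sum_empty, bdLap, if_pos rfl]
    push_cast
    field_simp
    ring
  | succ n ih =>
    rw [Finset.sum_Icc_succ_top (by omega : 1 ≤ n + 1)]
    have hk : bdKappa β m (n + 1 - 1) (n + 1) =
        bdLap β m (fun n => (n : ℝ)) (n + 1) - bdLap β m (fun n => (n : ℝ)) n := by
      rw [show n + 1 - 1 = n from rfl, bdKappa_succ β m hβ hm n,
        bdLap_neg_id, bdLap_neg_id]
      ring
    rw [hk]
    linarith
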